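/- Let G be a finite group with subgroups A, B such that G = AB and [A, B] ≤ F(G), the Fitting subgroup of G. If A and B are nilpotent, then G is metanilpotent, i.e., G/F(G) is nilpotent. -/

import Mathlib

/-- The Fitting subgroup: the join of all nilpotent normal subgroups. -/
def FittingSubgroup (G : Type*) [Group G] : Subgroup G :=
  ⨆ N : {N : Subgroup G // N.Normal ∧ Group.IsNilpotent N}, (N : Subgroup G)

theorem map_conj_of_normal {G : Type*} [Group G] {N : Subgroup G} (hN : N.Normal) (g : G) :
    N.map (MulAut.conj g).toMonoidHom = N := by
  apply le_antisymm
  · rintro x ⟨n, hn, rfl⟩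
    exact hN.conj_mem n hn g
  · intro n hn
    exact ⟨g⁻¹ * n * g, by simpa using hN.conj_mem n hn g⁻¹, by simp [MulAut.conj]; group⟩

instance FittingSubgroup.normal (G : Type*) [Group G] : (FittingSubgroup G).Normal := by
  constructor
  intro n hn g
  have h : (FittingSubgroup G).map (MulAut.conj g).toMonoidHom = FittingSubgroup G := by
    unfold FittingSubgroup
    rw [Subgroup.map_iSup]
    congr 1
    funext N
    exact map_conj_of_normal N.2.1 g
  rw [← h]
  exact ⟨n, hn, rfl⟩

/-- The Fitting series, bundled with normality:
`F 0 = ⊥` and `F (k+1) / F k = F(G / F k)`. -/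
def FittingSeriesAux (G : Type*) [Group G] : ℕ → {H : Subgroup G // H.Normal}
  | 0 => ⟨⊥, inferInstance⟩
  | (k+1) =>
      letI : (FittingSeriesAux G k : Subgroup G).Normal := (FittingSeriesAux G k).2
      ⟨(FittingSubgroup (G ⧸ (FittingSeriesAux G k : Subgroup G))).comap
          (QuotientGroup.mk' (FittingSeriesAux G k : Subgroup G)),
        (FittingSubgroup.normal _).comap _⟩

/-- The `k`-th term of the Fitting series of `G`. -/
def FittingSeries (G : Type*) [Group G] (k : ℕ) : Subgroup G := FittingSeriesAux G k

theorem stmt_19 {G : Type*} [Group G] [Finite G] (A B : Subgroup G)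
    (hG : ∀ g : G, ∃ a ∈ A, ∃ b ∈ B, g = a * b)
    (hcomm : ⁅A, B⁆ ≤ FittingSubgroup G)
    (hA : Group.IsNilpotent A) (hB : Group.IsNilpotent B) :
    Group.IsNilpotent (G ⧸ FittingSubgroup G) := by
  let π := QuotientGroup.mk' (FittingSubgroup G)
  have hc : ∀ a ∈ A, ∀ b ∈ B, π a * π b = π b * π a := by
    intro a ha b hb
    open scoped commutatorElement in
    have : ⁅a, b⁆ ∈ FittingSubgroup G :=
      hcomm (Subgroup.commutator_mem_commutator ha hb)
    open scoped commutatorElement in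
    have h1 : π ⁅a, b⁆ = 1 := (QuotientGroup.eq_one_iff _).2 this
    have h2 : π a * π b * (π a)⁻¹ * (π b)⁻¹ = 1 := by
      simpa [commutatorElement_def, map_mul, map_inv] using h1
    rw [mul_inv_eq_one] at h2
    exact mul_inv_eq_iff_eq_mul.mp h2
  let f : ↥A × ↥B →* G ⧸ FittingSubgroup G :=
    { toFun := fun p => π p.1 * π p.2
      map_one' := by simp
      map_mul' := by
        rintro ⟨a1, b1⟩ ⟨a2, b2⟩
        simp only [Subgroup.coe_mul, map_mul]
        have := hc a2 a2.2 b1 b1.2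
        calc π (a1:G) * π (a2:G) * (π (b1:G) * π (b2:G))
            = π (a1:G) * (π (a2:G) * π (b1:G)) * π (b2:G) := by group
          _ = π (a1:G) * (π (b1:G) * π (a2:G)) * π (b2:G) := by rw [this]
          _ = π (a1:G) * π (b1:G) * (π (a2:G) * π (b2:G)) := by group }
  have hf : Function.Surjective f := by
    intro q
    obtain ⟨g, rfl⟩ := QuotientGroup.mk'_surjective (FittingSubgroup G) q
    obtain ⟨a, ha, b, hb, rfl⟩ := hG g
    exact ⟨(⟨a, ha⟩, ⟨b, hb⟩), by simp [f, π]⟩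
  exact nilpotent_of_surjective f hf
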